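/- arXiv:0901.3960 — 2 statements merged into one kernel-verified Lean document; each statement's English description precedes it below -/
import Mathlib

section
/- Let (M^n, g) be a compact and connected Riemannian manifold of dimension n ≥ 2. Suppose there exists a non-trivial pair (ψ, α), where ψ is a smooth function and α is a 1-form, such that L_α g = ψ g (i.e. α is a conformal Killing 1-form with conformal factor ψ). If α is closed (dα = 0), then α ∧ dψ = 0, i.e. the 1-forms α and dψ are pointwise linearly dependent. -/
noncomputable section

open scoped Manifold
open Metric Module Finset

/-- The Euclidean model space `ℝⁿ`. -/
abbrev Euc (n : ℕ) : Type := EuclideanSpace ℝ (Fin n)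

/-- Directional derivative of a real valued function on a manifold along a
(trivialized) vector field, via `mfderiv`. -/
def dDeriv {n : ℕ} {M : Type} [TopologicalSpace M] [ChartedSpace (Euc n) M]
    (f : M → ℝ) (X : M → Euc n) (x : M) : ℝ :=
  mfderiv (𝓡 n) 𝓘(ℝ) f x (X x)

/-- Smoothness of a (trivialized) vector field. -/
def SmoothVF {n : ℕ} {M : Type} [TopologicalSpace M] [ChartedSpace (Euc n) M]
    (X : M → Euc n) : Prop :=
  ContMDiff (𝓡 n) 𝓘(ℝ, Euc n) (⊤ : ℕ∞) X

/-- Smoothness of a real valued function. -/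
def SmoothFn {n : ℕ} {M : Type} [TopologicalSpace M] [ChartedSpace (Euc n) M]
    (f : M → ℝ) : Prop :=
  ContMDiff (𝓡 n) 𝓘(ℝ) (⊤ : ℕ∞) f

/-- A Riemannian structure on a manifold `M` modelled on `ℝⁿ`, presented through a
(trivialized) tangent bundle `M × ℝⁿ`: a smooth metric `g`, its Levi-Civita
connection `conn` (characterized by being torsion free and metric), the Ricci
curvature `ric`, the scalar curvature `scal` and the positive Laplacian `lapl`
(the latter three characterized via `g`-orthonormal bases). -/
structure RiemannStructure (n : ℕ) (M : Type) [TopologicalSpace M]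
    [ChartedSpace (Euc n) M] : Type where
  /-- the Riemannian metric -/
  g : M → Euc n → Euc n → ℝ
  g_symm : ∀ x u v, g x u v = g x v u
  g_add_left : ∀ x u v w, g x (u + v) w = g x u w + g x v w
  g_smul_left : ∀ x (a : ℝ) u v, g x (a • u) v = a * g x u v
  g_posdef : ∀ x u, u ≠ 0 → 0 < g x u u
  g_smooth : ∀ X Y : M → Euc n, SmoothVF (n := n) X → SmoothVF (n := n) Y →
    SmoothFn (n := n) (fun x => g x (X x) (Y x))
  /-- the Levi-Civita covariant derivative on vector fields -/
  conn : (M → Euc n) → (M → Euc n) → M → Euc n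
  conn_smooth : ∀ X Y, SmoothVF (n := n) X → SmoothVF (n := n) Y → SmoothVF (n := n) (conn X Y)
  conn_tensor_fst : ∀ X X' Y x, X x = X' x → conn X Y x = conn X' Y x
  conn_add_fst : ∀ X X' Y x, conn (X + X') Y x = conn X Y x + conn X' Y x
  conn_add_snd : ∀ X Y Y', SmoothVF (n := n) Y → SmoothVF (n := n) Y' → ∀ x,
    conn X (Y + Y') x = conn X Y x + conn X Y' x
  conn_smul_fst : ∀ (f : M → ℝ) X Y x, conn (fun p => f p • X p) Y x = f x • conn X Y x
  conn_leibniz : ∀ (f : M → ℝ) X Y, SmoothFn (n := n) f → SmoothVF (n := n) Y → ∀ x,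
    conn X (fun p => f p • Y p) x = dDeriv (n := n) f X x • Y x + f x • conn X Y x
  /-- `∇` is torsion free : `∇_X Y - ∇_Y X = [X,Y]` acts on functions as the commutator -/
  conn_torsion_free : ∀ (f : M → ℝ) X Y, SmoothFn (n := n) f → SmoothVF (n := n) X → SmoothVF (n := n) Y → ∀ x,
    dDeriv (n := n) f (fun p => conn X Y p - conn Y X p) x
      = dDeriv (n := n) (dDeriv (n := n) f Y) X x - dDeriv (n := n) (dDeriv (n := n) f X) Y x
  /-- `∇` is metric : `X ⬝ g(Y,Z) = g(∇_X Y, Z) + g(Y, ∇_X Z)` -/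
  conn_metric : ∀ X Y Z, SmoothVF (n := n) X → SmoothVF (n := n) Y → SmoothVF (n := n) Z → ∀ x,
    dDeriv (n := n) (fun p => g p (Y p) (Z p)) X x
      = g x (conn X Y x) (Z x) + g x (Y x) (conn X Z x)
  /-- `g`-orthonormal bases exist at every point -/
  onb_exists : ∀ x : M, ∃ b : Fin n → Euc n,
    ∀ i j, g x (b i) (b j) = if i = j then (1 : ℝ) else 0
  /-- the Ricci curvature (as a pointwise 2-tensor) -/
  ric : M → Euc n → Euc n → ℝ
  /-- `Ric(X,Y) = ∑ᵢ g(R(eᵢ,X)Y, eᵢ)` for any `g`-orthonormal basis,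
  where `R(X,Y)Z = ∇_X ∇_Y Z - ∇_Y ∇_X Z - ∇_[X,Y] Z` -/
  ric_spec : ∀ (x : M) (b : Fin n → Euc n),
    (∀ i j, g x (b i) (b j) = if i = j then (1 : ℝ) else 0) →
    ∀ X Y : M → Euc n, SmoothVF (n := n) X → SmoothVF (n := n) Y →
    ric x (X x) (Y x) = ∑ i : Fin n,
      g x (conn (fun _ => b i) (conn X Y) x - conn X (conn (fun _ => b i) Y) x
        - conn (fun p => conn (fun _ => b i) X p - conn X (fun _ => b i) p) Y x) (b i)
  /-- the scalar curvature -/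
  scal : M → ℝ
  scal_spec : ∀ (x : M) (b : Fin n → Euc n),
    (∀ i j, g x (b i) (b j) = if i = j then (1 : ℝ) else 0) →
    scal x = ∑ i : Fin n, ric x (b i) (b i)
  /-- the positive Laplacian `Δ f = - tr_g Hess f` -/
  lapl : (M → ℝ) → M → ℝ
  lapl_spec : ∀ (f : M → ℝ), SmoothFn (n := n) f → ∀ (x : M) (b : Fin n → Euc n),
    (∀ i j, g x (b i) (b j) = if i = j then (1 : ℝ) else 0) →
    lapl f x = -∑ i : Fin n,
      (dDeriv (n := n) (dDeriv (n := n) f (fun _ => b i)) (fun _ => b i) x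
        - dDeriv (n := n) f (conn (fun _ => b i) (fun _ => b i)) x)

namespace RiemannStructure

variable {n : ℕ} {M : Type} [TopologicalSpace M] [ChartedSpace (Euc n) M]
  (G : RiemannStructure n M)

/-- The Riemann curvature operator `R(X,Y)Z = ∇_X ∇_Y Z - ∇_Y ∇_X Z - ∇_[X,Y] Z`. -/
def curv (X Y Z : M → Euc n) : M → Euc n := fun x =>
  G.conn X (G.conn Y Z) x - G.conn Y (G.conn X Z) x
    - G.conn (fun p => G.conn X Y p - G.conn Y X p) Z x

/-- The Hessian of a function, `Hess f (X,Y) = X ⬝ (Y ⬝ f) - (∇_X Y) ⬝ f`. -/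
def hess (f : M → ℝ) (X Y : M → Euc n) : M → ℝ := fun x =>
  dDeriv (n := n) (dDeriv (n := n) f Y) X x - dDeriv (n := n) f (G.conn X Y) x

/-- The operator `U_g^* (f) = Hess f - f Ric + (Δ f) g`. -/
def Ustar (f : M → ℝ) (X Y : M → Euc n) : M → ℝ := fun x =>
  G.hess f X Y x - f x * G.ric x (X x) (Y x) + G.lapl f x * G.g x (X x) (Y x)

/-- Covariant derivative of a 2-tensor along `X` :
`(∇_X S)(Y,Z) = X ⬝ S(Y,Z) - S(∇_X Y, Z) - S(Y, ∇_X Z)`. -/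
def cov2 (S : (M → Euc n) → (M → Euc n) → M → ℝ) (X Y Z : M → Euc n) : M → ℝ := fun x =>
  dDeriv (n := n) (fun p => S Y Z p) X x - S (G.conn X Y) Z x - S Y (G.conn X Z) x

/-- `d^∇ S (X,Y,Z) = (∇_X S)(Y,Z) - (∇_Y S)(X,Z)`. -/
def dnabla (S : (M → Euc n) → (M → Euc n) → M → ℝ) (X Y Z : M → Euc n) : M → ℝ := fun x =>
  G.cov2 S X Y Z x - G.cov2 S Y X Z x

/-- The Ricci curvature as a 2-tensor on vector fields. -/
def ricT : (M → Euc n) → (M → Euc n) → M → ℝ := fun X Y x => G.ric x (X x) (Y x)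

/-- The Lie derivative of the metric along (the vector field dual to) a one-form `A` :
`(L_A g)(X,Y) = g(∇_X A, Y) + g(∇_Y A, X)`. -/
def lieg (A X Y : M → Euc n) : M → ℝ := fun x =>
  G.g x (G.conn X A x) (Y x) + G.g x (G.conn Y A x) (X x)

end RiemannStructure

/-- Product rule for `dDeriv`. -/
lemma dDeriv_mul_aux {n : ℕ} {M : Type} [TopologicalSpace M] [ChartedSpace (Euc n) M]
    [IsManifold (𝓡 n) (⊤ : ℕ∞) M]
    (u v : M → ℝ) (hu : SmoothFn (n := n) u) (hv : SmoothFn (n := n) v)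
    (X : M → Euc n) (x : M) :
    dDeriv (n := n) (fun p => u p * v p) X x
      = u x * dDeriv (n := n) v X x + dDeriv (n := n) u X x * v x := by
  have hu' : HasMFDerivAt (𝓡 n) 𝓘(ℝ) u x (mfderiv (𝓡 n) 𝓘(ℝ) u x) :=
    (hu.mdifferentiableAt (by simp)).hasMFDerivAt
  have hv' : HasMFDerivAt (𝓡 n) 𝓘(ℝ) v x (mfderiv (𝓡 n) 𝓘(ℝ) v x) :=
    (hv.mdifferentiableAt (by simp)).hasMFDerivAt
  have h := hu'.mul' hv'
  have hm := h.mfderiv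
  show mfderiv (𝓡 n) 𝓘(ℝ) (u * v) x (X x) = _
  rw [hm]
  rfl

/-- On a compact connected Riemannian manifold of dimension `n ≥ 2`,
if `(ψ, α)` is a non-trivial pair with `L_α g = ψ g` and the conformal Killing form `α`
(identified with its dual vector field `A`) is closed, then `α ∧ dψ = 0`. -/

theorem stmt0 {n : ℕ} (hn : 2 ≤ n) {M : Type} [TopologicalSpace M] [T2Space M]
    [ChartedSpace (Euc n) M] [IsManifold (𝓡 n) (⊤ : ℕ∞) M]
    [CompactSpace M] [ConnectedSpace M] (G : RiemannStructure n M)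
    (ψ : M → ℝ) (hψs : SmoothFn (n := n) ψ)
    (A : M → Euc n) (hAs : SmoothVF (n := n) A)
    (h_nontrivial : ψ ≠ 0 ∨ A ≠ 0)
    -- `L_α g = ψ g`
    (h_conf : ∀ (X Y : M → Euc n) (x : M), G.lieg A X Y x = ψ x * G.g x (X x) (Y x))
    -- `α` is closed : `dα (X, Y) = g(∇_X A, Y) - g(∇_Y A, X) = 0`
    (h_closed : ∀ (X Y : M → Euc n) (x : M),
      G.g x (G.conn X A x) (Y x) = G.g x (G.conn Y A x) (X x)) :
    -- `(α ∧ dψ)(X, Y) = 0`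
    ∀ (X Y : M → Euc n) (x : M),
      G.g x (A x) (X x) * dDeriv (n := n) ψ Y x
        - G.g x (A x) (Y x) * dDeriv (n := n) ψ X x = 0 := by
  classical
  -- linearity helpers for g
  have g_neg : ∀ x (u v : Euc n), G.g x (-u) v = -G.g x u v := by
    intro x u v
    have := G.g_smul_left x (-1 : ℝ) u v
    simpa using this
  have g_sub : ∀ x (u u' v : Euc n), G.g x (u - u') v = G.g x u v - G.g x u' v := by
    intro x u u' v
    have := G.g_add_left x u (-u') v
    rw [g_neg] at this
    simpa [sub_eq_add_neg] using this
  -- key consequence of conformal + closed: g(∇_X A, Y) = (ψ/2) g(X,Y)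
  have key : ∀ (X Y : M → Euc n) (x : M),
      G.g x (G.conn X A x) (Y x) = ψ x * G.g x (X x) (Y x) / 2 := by
    intro X Y x
    have h1 := h_conf X Y x
    have h2 := h_closed X Y x
    unfold RiemannStructure.lieg at h1
    linarith
  -- the function f = g(A,A)
  set f : M → ℝ := fun p => G.g p (A p) (A p) with hf_def
  have hfs : SmoothFn (n := n) f := G.g_smooth A A hAs hAs
  -- claim1 : for smooth X, dDeriv f X x = ψ x * g(X x, A x)
  have claim1 : ∀ (X : M → Euc n), SmoothVF (n := n) X → ∀ x,
      dDeriv (n := n) f X x = ψ x * G.g x (X x) (A x) := by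
    intro X hX x
    have hm := G.conn_metric X A A hX hAs hAs x
    have hk := key X A x
    have hs : G.g x (A x) (G.conn X A x) = G.g x (G.conn X A x) (A x) := G.g_symm x _ _
    rw [hs] at hm
    rw [hm, hk]; ring
  -- claim1' : pointwise version for arbitrary W, via constant fields
  have claim1' : ∀ (W : M → Euc n) (x : M),
      dDeriv (n := n) f W x = ψ x * G.g x (W x) (A x) := by
    intro W x
    have hc : SmoothVF (n := n) (fun _ : M => W x) := contMDiff_const
    have := claim1 (fun _ => W x) hc x
    exact this
  -- main claim for smooth vector fields
  have main : ∀ (X Y : M → Euc n), SmoothVF (n := n) X → SmoothVF (n := n) Y → ∀ x,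
      G.g x (A x) (X x) * dDeriv (n := n) ψ Y x
        - G.g x (A x) (Y x) * dDeriv (n := n) ψ X x = 0 := by
    intro X Y hX hY x
    have htf := G.conn_torsion_free f X Y hfs hX hY x
    -- LHS of torsion-free
    have hL : dDeriv (n := n) f (fun p => G.conn X Y p - G.conn Y X p) x
        = ψ x * (G.g x (G.conn X Y x) (A x) - G.g x (G.conn Y X x) (A x)) := by
      rw [claim1' (fun p => G.conn X Y p - G.conn Y X p) x, g_sub]
    -- dDeriv f Y as a function
    have hfY : dDeriv (n := n) f Y = fun p => ψ p * G.g p (Y p) (A p) := by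
      funext p; exact claim1 Y hY p
    have hfX : dDeriv (n := n) f X = fun p => ψ p * G.g p (X p) (A p) := by
      funext p; exact claim1 X hX p
    have hgYA : SmoothFn (n := n) (fun p => G.g p (Y p) (A p)) := G.g_smooth Y A hY hAs
    have hgXA : SmoothFn (n := n) (fun p => G.g p (X p) (A p)) := G.g_smooth X A hX hAs
    have hR1 : dDeriv (n := n) (dDeriv (n := n) f Y) X x
        = ψ x * (G.g x (G.conn X Y x) (A x) + ψ x * G.g x (X x) (Y x) / 2)
          + dDeriv (n := n) ψ X x * G.g x (Y x) (A x) := by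
      rw [hfY, dDeriv_mul_aux ψ _ hψs hgYA X x]
      have hm := G.conn_metric X Y A hX hY hAs x
      rw [hm, G.g_symm x (Y x) (G.conn X A x), key X Y x]
    have hR2 : dDeriv (n := n) (dDeriv (n := n) f X) Y x
        = ψ x * (G.g x (G.conn Y X x) (A x) + ψ x * G.g x (Y x) (X x) / 2)
          + dDeriv (n := n) ψ Y x * G.g x (X x) (A x) := by
      rw [hfX, dDeriv_mul_aux ψ _ hψs hgXA Y x]
      have hm := G.conn_metric Y X A hY hX hAs x
      rw [hm, G.g_symm x (X x) (G.conn Y A x), key Y X x]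
    rw [hL, hR1, hR2] at htf
    have hsym1 : G.g x (X x) (Y x) = G.g x (Y x) (X x) := G.g_symm x _ _
    have hsymA1 : G.g x (A x) (X x) = G.g x (X x) (A x) := G.g_symm x _ _
    have hsymA2 : G.g x (A x) (Y x) = G.g x (Y x) (A x) := G.g_symm x _ _
    rw [hsymA1, hsymA2]
    linear_combination htf + (ψ x * ψ x / 2) * hsym1
  -- reduce the general statement to constant (hence smooth) fields
  intro X Y x
  have hcX : SmoothVF (n := n) (fun _ : M => X x) := contMDiff_const
  have hcY : SmoothVF (n := n) (fun _ : M => Y x) := contMDiff_const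
  exact main (fun _ => X x) (fun _ => Y x) hcX hcY x

end
end

section
/- Let (M^n, g) be a compact and connected Riemannian manifold of dimension n ≥ 2 admitting a 1-form α with ∇α = ψ g for some smooth function ψ ≢ 0 (a closed conformal Killing non-isometric 1-form). Then for all vector fields X, Y one has d^∇ Ric^g (X, Y, α) = 0, where α is identified with its dual vector field. -/
noncomputable section

open scoped Manifold
open Metric Module Finset

section Aux

variable {n : ℕ} {M : Type} [TopologicalSpace M] [ChartedSpace (Euc n) M]

lemma smoothVF_const (v : Euc n) : SmoothVF (n := n) (fun _ : M => v) := contMDiff_const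

lemma SmoothFn.mdiffAt {f : M → ℝ} (hf : SmoothFn (n := n) f) (x : M) :
    MDifferentiableAt (𝓡 n) 𝓘(ℝ) f x := (hf x).mdifferentiableAt (by simp)

lemma dDeriv_fun_sub {f g : M → ℝ} (hf : SmoothFn (n := n) f) (hg : SmoothFn (n := n) g)
    (X : M → Euc n) (x : M) :
    dDeriv (n := n) (fun p => f p - g p) X x = dDeriv (n := n) f X x - dDeriv (n := n) g X x := by
  have h := ((hf.mdiffAt x).hasMFDerivAt.sub (hg.mdiffAt x).hasMFDerivAt).mfderiv
  show mfderiv (𝓡 n) 𝓘(ℝ) (f - g) x (X x) = _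
  rw [h]; rfl

lemma dDeriv_fun_add {f g : M → ℝ} (hf : SmoothFn (n := n) f) (hg : SmoothFn (n := n) g)
    (X : M → Euc n) (x : M) :
    dDeriv (n := n) (fun p => f p + g p) X x = dDeriv (n := n) f X x + dDeriv (n := n) g X x := by
  have h := ((hf.mdiffAt x).hasMFDerivAt.add (hg.mdiffAt x).hasMFDerivAt).mfderiv
  show mfderiv (𝓡 n) 𝓘(ℝ) (f + g) x (X x) = _
  rw [h]; rfl

lemma dDeriv_vec_sub (f : M → ℝ) (U V : M → Euc n) (x : M) :
    dDeriv (n := n) f (fun p => U p - V p) x = dDeriv (n := n) f U x - dDeriv (n := n) f V x :=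
  (mfderiv (𝓡 n) 𝓘(ℝ) f x).map_sub (U x) (V x)

lemma dDeriv_vec_add (f : M → ℝ) (U V : M → Euc n) (x : M) :
    dDeriv (n := n) f (fun p => U p + V p) x = dDeriv (n := n) f U x + dDeriv (n := n) f V x :=
  (mfderiv (𝓡 n) 𝓘(ℝ) f x).map_add (U x) (V x)

lemma dDeriv_const (c : ℝ) (X : M → Euc n) (x : M) :
    dDeriv (n := n) (fun _ : M => c) X x = 0 := by
  show mfderiv (𝓡 n) 𝓘(ℝ) (fun _ : M => c) x (X x) = 0
  rw [mfderiv_const]; rfl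


namespace RiemannStructure

variable (G : RiemannStructure n M)

lemma g_zero_left (x : M) (w : Euc n) : G.g x 0 w = 0 := by
  have := G.g_smul_left x 0 0 w
  simpa using this

lemma g_neg_left (x : M) (v w : Euc n) : G.g x (-v) w = - G.g x v w := by
  have := G.g_smul_left x (-1) v w
  simpa using this

lemma g_sub_left (x : M) (u v w : Euc n) : G.g x (u - v) w = G.g x u w - G.g x v w := by
  rw [sub_eq_add_neg, G.g_add_left, G.g_neg_left]; ring

lemma g_smul_right (x : M) (a : ℝ) (u v : Euc n) : G.g x u (a • v) = a * G.g x u v := by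
  rw [G.g_symm, G.g_smul_left, G.g_symm]

lemma g_sum_left {ι : Type*} (x : M) (s : Finset ι) (v : ι → Euc n) (w : Euc n) :
    G.g x (∑ i ∈ s, v i) w = ∑ i ∈ s, G.g x (v i) w := by
  classical
  induction s using Finset.induction with
  | empty => simpa using G.g_zero_left x w
  | insert _ _ h ih => rw [Finset.sum_insert h, Finset.sum_insert h, G.g_add_left, ih]

lemma onb_expand (hn : 0 < n) {x : M} {b : Fin n → Euc n}
    (hb : ∀ i j, G.g x (b i) (b j) = if i = j then (1 : ℝ) else 0) (v : Euc n) :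
    ∑ i, G.g x v (b i) • b i = v := by
  classical
  haveI : Nonempty (Fin n) := ⟨⟨0, hn⟩⟩
  have li : LinearIndependent ℝ b := by
    rw [Fintype.linearIndependent_iff]
    intro c hc i
    have h1 := congrArg (fun u => G.g x u (b i)) hc
    simp only [G.g_sum_left, G.g_smul_left, hb, G.g_zero_left] at h1
    simpa using h1
  have card : Fintype.card (Fin n) = Module.finrank ℝ (Euc n) := by
    simp [finrank_euclideanSpace_fin]
  let B : Basis (Fin n) ℝ (Euc n) := basisOfLinearIndependentOfCardEqFinrank li card
  have hBc : ∀ i, B i = b i := fun i =>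
    congrFun (coe_basisOfLinearIndependentOfCardEqFinrank li card) i
  set w : Euc n := v - ∑ i, G.g x v (b i) • b i with hw
  have hwb : ∀ j, G.g x w (b j) = 0 := by
    intro j
    rw [hw, G.g_sub_left, G.g_sum_left]
    simp only [G.g_smul_left, hb]
    rw [Finset.sum_eq_single j]
    · simp
    · intro i _ hij; simp [hij]
    · simp
  have hsw : (∑ i, B.repr w i • B i) = w := B.sum_repr w
  have hww : G.g x w w = 0 := by
    have e1 : G.g x w w = G.g x (∑ i, B.repr w i • B i) w :=
      congrArg (fun u => G.g x u w) hsw.symm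
    rw [e1, G.g_sum_left]
    simp only [G.g_smul_left, hBc]
    have hz : ∀ i ∈ Finset.univ, B.repr w i * G.g x (b i) w = 0 := by
      intro i _
      rw [G.g_symm, hwb i, mul_zero]
    rw [Finset.sum_congr rfl hz, Finset.sum_const_zero]
  have hw0 : w = 0 := by
    by_contra h
    exact absurd hww (ne_of_gt (G.g_posdef x w h))
  have h0 : v - ∑ i, G.g x v (b i) • b i = 0 := by rw [← hw]; exact hw0
  exact (sub_eq_zero.mp h0).symm

lemma smooth_dDeriv (G : RiemannStructure n M) (hn : 0 < n) {f : M → ℝ} {X : M → Euc n}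
    (hf : SmoothFn (n := n) f) (hX : SmoothVF (n := n) X) :
    SmoothFn (n := n) (dDeriv (n := n) f X) := by
  classical
  set i0 : Fin n := ⟨0, hn⟩
  set e : Euc n := EuclideanSpace.single i0 (1 : ℝ) with he
  have hfe : SmoothVF (n := n) (fun p => f p • e) := ContMDiff.smul hf contMDiff_const
  have h1 : SmoothVF (n := n) (G.conn X (fun p => f p • e)) :=
    G.conn_smooth _ _ hX hfe
  have h2 : SmoothVF (n := n)
      (fun x => G.conn X (fun p => f p • e) x - f x • G.conn X (fun _ => e) x) :=
    ContMDiff.sub h1 (ContMDiff.smul hf (G.conn_smooth X _ hX (smoothVF_const e)))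
  have key : ∀ x, dDeriv (n := n) f X x =
      EuclideanSpace.proj i0
        (G.conn X (fun p => f p • e) x - f x • G.conn X (fun _ => e) x) := by
    intro x
    have hl := G.conn_leibniz f X (fun _ => e) hf (smoothVF_const e) x
    rw [hl]
    simp [e, EuclideanSpace.single_apply]
  have hs := ((EuclideanSpace.proj i0 :
      EuclideanSpace ℝ (Fin n) →L[ℝ] ℝ).contMDiff (n := (⊤ : ℕ∞))).comp h2
  have heq : dDeriv (n := n) f X = (⇑(EuclideanSpace.proj i0 :
      EuclideanSpace ℝ (Fin n) →L[ℝ] ℝ) ∘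
      fun x => G.conn X (fun p => f p • e) x - f x • G.conn X (fun _ => e) x) := by
    funext x
    exact key x
  show ContMDiff (𝓡 n) 𝓘(ℝ) (⊤ : ℕ∞) (dDeriv (n := n) f X)
  rw [heq]
  exact hs

lemma conn_sub_snd {X U V : M → Euc n} (hU : SmoothVF (n := n) U) (hV : SmoothVF (n := n) V)
    (x : M) :
    G.conn X (fun p => U p - V p) x = G.conn X U x - G.conn X V x := by
  have hD : SmoothVF (n := n) (fun p => U p - V p) := ContMDiff.sub hU hV
  have hUV : (fun p => U p - V p) + V = U := by funext p; simp
  have h := G.conn_add_snd X (fun p => U p - V p) V hD hV x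
  rw [hUV] at h
  rw [h]; abel

lemma conn_const_smul_snd (c : ℝ) {X Y : M → Euc n} (hY : SmoothVF (n := n) Y) (x : M) :
    G.conn X (fun p => c • Y p) x = c • G.conn X Y x := by
  have h := G.conn_leibniz (fun _ => c) X Y contMDiff_const hY x
  rw [dDeriv_const] at h
  simpa using h

/-- The bracket built from the connection. -/
def brk (X Y : M → Euc n) : M → Euc n := fun p => G.conn X Y p - G.conn Y X p

lemma brk_smooth {X Y : M → Euc n} (hX : SmoothVF (n := n) X) (hY : SmoothVF (n := n) Y) :
    SmoothVF (n := n) (G.brk X Y) :=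
  ContMDiff.sub (G.conn_smooth X Y hX hY) (G.conn_smooth Y X hY hX)

lemma curv_eq (X Y Z : M → Euc n) (x : M) :
    G.curv X Y Z x = G.conn X (G.conn Y Z) x - G.conn Y (G.conn X Z) x
      - G.conn (G.brk X Y) Z x := rfl

lemma curv_swap (X Y Z : M → Euc n) (x : M) : G.curv Y X Z x = - G.curv X Y Z x := by
  have hfun : G.brk Y X = fun p => (-1 : ℝ) • G.brk X Y p := by
    funext p
    show G.conn Y X p - G.conn X Y p = (-1 : ℝ) • (G.conn X Y p - G.conn Y X p)
    rw [neg_one_smul]; abel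
  have h := G.conn_smul_fst (fun _ => (-1 : ℝ)) (G.brk X Y) Z x
  rw [curv_eq, curv_eq, hfun, h, neg_one_smul]
  abel

lemma curv_antisym (G : RiemannStructure n M) {X Y Z W : M → Euc n}
    (hX : SmoothVF (n := n) X) (hY : SmoothVF (n := n) Y)
    (hZ : SmoothVF (n := n) Z) (hW : SmoothVF (n := n) W) (x : M) :
    G.g x (G.curv X Y Z x) (W x) + G.g x (G.curv X Y W x) (Z x) = 0 := by
  set h : M → ℝ := fun p => G.g p (Z p) (W p) with hh
  have hhs : SmoothFn (n := n) h := G.g_smooth Z W hZ hW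
  have eY : dDeriv (n := n) h Y = fun p =>
      G.g p (G.conn Y Z p) (W p) + G.g p (Z p) (G.conn Y W p) :=
    funext fun p => G.conn_metric Y Z W hY hZ hW p
  have eX : dDeriv (n := n) h X = fun p =>
      G.g p (G.conn X Z p) (W p) + G.g p (Z p) (G.conn X W p) :=
    funext fun p => G.conn_metric X Z W hX hZ hW p
  have a1 := G.conn_metric X (G.conn Y Z) W hX (G.conn_smooth Y Z hY hZ) hW x
  have a2 := G.conn_metric X Z (G.conn Y W) hX hZ (G.conn_smooth Y W hY hW) x
  have b1 := G.conn_metric Y (G.conn X Z) W hY (G.conn_smooth X Z hX hZ) hW x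
  have b2 := G.conn_metric Y Z (G.conn X W) hY hZ (G.conn_smooth X W hX hW) x
  have AY : dDeriv (n := n) (dDeriv (n := n) h Y) X x =
      (G.g x (G.conn X (G.conn Y Z) x) (W x) + G.g x (G.conn Y Z x) (G.conn X W x))
      + (G.g x (G.conn X Z x) (G.conn Y W x) + G.g x (Z x) (G.conn X (G.conn Y W) x)) := by
    rw [eY, dDeriv_fun_add (G.g_smooth _ _ (G.conn_smooth Y Z hY hZ) hW)
      (G.g_smooth _ _ hZ (G.conn_smooth Y W hY hW)), a1, a2]
  have BX : dDeriv (n := n) (dDeriv (n := n) h X) Y x =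
      (G.g x (G.conn Y (G.conn X Z) x) (W x) + G.g x (G.conn X Z x) (G.conn Y W x))
      + (G.g x (G.conn Y Z x) (G.conn X W x) + G.g x (Z x) (G.conn Y (G.conn X W) x)) := by
    rw [eX, dDeriv_fun_add (G.g_smooth _ _ (G.conn_smooth X Z hX hZ) hW)
      (G.g_smooth _ _ hZ (G.conn_smooth X W hX hW)), b1, b2]
  have hT : SmoothVF (n := n) (G.brk X Y) := G.brk_smooth hX hY
  have c := G.conn_metric (G.brk X Y) Z W hT hZ hW x
  have t : dDeriv (n := n) h (G.brk X Y) x =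
      dDeriv (n := n) (dDeriv (n := n) h Y) X x
        - dDeriv (n := n) (dDeriv (n := n) h X) Y x :=
    G.conn_torsion_free h X Y hhs hX hY x
  have gl1 : G.g x (G.curv X Y Z x) (W x) =
      G.g x (G.conn X (G.conn Y Z) x) (W x) - G.g x (G.conn Y (G.conn X Z) x) (W x)
        - G.g x (G.conn (G.brk X Y) Z x) (W x) := by
    rw [curv_eq, G.g_sub_left, G.g_sub_left]
  have gl2 : G.g x (G.curv X Y W x) (Z x) =
      G.g x (G.conn X (G.conn Y W) x) (Z x) - G.g x (G.conn Y (G.conn X W) x) (Z x)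
        - G.g x (G.conn (G.brk X Y) W x) (Z x) := by
    rw [curv_eq, G.g_sub_left, G.g_sub_left]
  have s1 : G.g x (G.conn X (G.conn Y W) x) (Z x)
      = G.g x (Z x) (G.conn X (G.conn Y W) x) := G.g_symm _ _ _
  have s2 : G.g x (G.conn Y (G.conn X W) x) (Z x)
      = G.g x (Z x) (G.conn Y (G.conn X W) x) := G.g_symm _ _ _
  have s3 : G.g x (G.conn (G.brk X Y) W x) (Z x)
      = G.g x (Z x) (G.conn (G.brk X Y) W x) := G.g_symm _ _ _
  linarith [AY, BX, c, t, gl1, gl2, s1, s2, s3]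

lemma bianchi (G : RiemannStructure n M) [T2Space M] [IsManifold (𝓡 n) (⊤ : ℕ∞) M]
    [CompactSpace M] (hn : 0 < n) {X Y Z : M → Euc n}
    (hX : SmoothVF (n := n) X) (hY : SmoothVF (n := n) Y) (hZ : SmoothVF (n := n) Z) (x : M) :
    G.curv X Y Z x + G.curv Y Z X x + G.curv Z X Y x = 0 := by
  have e1 : G.brk X (G.brk Y Z) x =
      (G.conn X (G.conn Y Z) x - G.conn X (G.conn Z Y) x) - G.conn (G.brk Y Z) X x := by
    show G.conn X (G.brk Y Z) x - G.conn (G.brk Y Z) X x = _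
    exact congrArg (fun t => t - G.conn (G.brk Y Z) X x)
      (G.conn_sub_snd (G.conn_smooth Y Z hY hZ) (G.conn_smooth Z Y hZ hY) x)
  have e2 : G.brk Y (G.brk Z X) x =
      (G.conn Y (G.conn Z X) x - G.conn Y (G.conn X Z) x) - G.conn (G.brk Z X) Y x := by
    show G.conn Y (G.brk Z X) x - G.conn (G.brk Z X) Y x = _
    exact congrArg (fun t => t - G.conn (G.brk Z X) Y x)
      (G.conn_sub_snd (G.conn_smooth Z X hZ hX) (G.conn_smooth X Z hX hZ) x)
  have e3 : G.brk Z (G.brk X Y) x =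
      (G.conn Z (G.conn X Y) x - G.conn Z (G.conn Y X) x) - G.conn (G.brk X Y) Z x := by
    show G.conn Z (G.brk X Y) x - G.conn (G.brk X Y) Z x = _
    exact congrArg (fun t => t - G.conn (G.brk X Y) Z x)
      (G.conn_sub_snd (G.conn_smooth X Y hX hY) (G.conn_smooth Y X hY hX) x)
  have hgroup : G.curv X Y Z x + G.curv Y Z X x + G.curv Z X Y x =
      G.brk X (G.brk Y Z) x + G.brk Y (G.brk Z X) x + G.brk Z (G.brk X Y) x := by
    rw [curv_eq, curv_eq, curv_eq, e1, e2, e3]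
    abel
  have hsep : ∀ f : M → ℝ, SmoothFn (n := n) f →
      mfderiv (𝓡 n) 𝓘(ℝ) f x
        (G.brk X (G.brk Y Z) x + G.brk Y (G.brk Z X) x + G.brk Z (G.brk X Y) x) = 0 := by
    intro f hf
    have hterm : ∀ P Q R : M → Euc n, SmoothVF (n := n) P → SmoothVF (n := n) Q →
        SmoothVF (n := n) R →
        dDeriv (n := n) f (G.brk P (G.brk Q R)) x
          = dDeriv (n := n) (dDeriv (n := n) (dDeriv (n := n) f R) Q) P x
            - dDeriv (n := n) (dDeriv (n := n) (dDeriv (n := n) f Q) R) P x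
            - dDeriv (n := n) (dDeriv (n := n) (dDeriv (n := n) f P) R) Q x
            + dDeriv (n := n) (dDeriv (n := n) (dDeriv (n := n) f P) Q) R x := by
      intro P Q R hP hQ hR
      have hQR : SmoothVF (n := n) (G.brk Q R) := G.brk_smooth hQ hR
      have t1 : dDeriv (n := n) f (G.brk P (G.brk Q R)) x
          = dDeriv (n := n) (dDeriv (n := n) f (G.brk Q R)) P x
            - dDeriv (n := n) (dDeriv (n := n) f P) (G.brk Q R) x :=
        G.conn_torsion_free f P (G.brk Q R) hf hP hQR x
      have eQR : dDeriv (n := n) f (G.brk Q R) = fun p =>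
          dDeriv (n := n) (dDeriv (n := n) f R) Q p
            - dDeriv (n := n) (dDeriv (n := n) f Q) R p :=
        funext fun p => G.conn_torsion_free f Q R hf hQ hR p
      have hA : dDeriv (n := n) (dDeriv (n := n) f (G.brk Q R)) P x
          = dDeriv (n := n) (dDeriv (n := n) (dDeriv (n := n) f R) Q) P x
            - dDeriv (n := n) (dDeriv (n := n) (dDeriv (n := n) f Q) R) P x := by
        rw [eQR, dDeriv_fun_sub
          (G.smooth_dDeriv hn (G.smooth_dDeriv hn hf hR) hQ)
          (G.smooth_dDeriv hn (G.smooth_dDeriv hn hf hQ) hR)]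
      have hB : dDeriv (n := n) (dDeriv (n := n) f P) (G.brk Q R) x
          = dDeriv (n := n) (dDeriv (n := n) (dDeriv (n := n) f P) R) Q x
            - dDeriv (n := n) (dDeriv (n := n) (dDeriv (n := n) f P) Q) R x :=
        G.conn_torsion_free (dDeriv (n := n) f P) Q R (G.smooth_dDeriv hn hf hP) hQ hR x
      rw [t1, hA, hB]; ring
    have goal2 : dDeriv (n := n) f (G.brk X (G.brk Y Z)) x
        + dDeriv (n := n) f (G.brk Y (G.brk Z X)) x
        + dDeriv (n := n) f (G.brk Z (G.brk X Y)) x = 0 := by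
      rw [hterm X Y Z hX hY hZ, hterm Y Z X hY hZ hX, hterm Z X Y hZ hX hY]
      ring
    have hm : ∀ u v : Euc n, mfderiv (𝓡 n) 𝓘(ℝ) f x (u + v)
        = mfderiv (𝓡 n) 𝓘(ℝ) f x u + mfderiv (𝓡 n) 𝓘(ℝ) f x v :=
      fun u v => (mfderiv (𝓡 n) 𝓘(ℝ) f x).map_add u v
    rw [hm, hm]
    exact goal2
  obtain ⟨N, emb, hembs, -, hinj⟩ := exists_embedding_euclidean_of_compact (I := 𝓡 n) (M := M)
  set J : Euc n := G.brk X (G.brk Y Z) x + G.brk Y (G.brk Z X) x + G.brk Z (G.brk X Y) x with hJdef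
  have hJ : mfderiv (𝓡 n) 𝓘(ℝ, EuclideanSpace ℝ (Fin N)) emb x J = 0 := by
    have hd : MDifferentiableAt (𝓡 n) 𝓘(ℝ, EuclideanSpace ℝ (Fin N)) emb x :=
      (hembs x).mdifferentiableAt (by simp)
    refine PiLp.ext fun j => ?_
    have hcomp : mfderiv (𝓡 n) 𝓘(ℝ) (fun p => (EuclideanSpace.proj j) (emb p)) x
        = (EuclideanSpace.proj (𝕜 := ℝ) j).comp
            (mfderiv (𝓡 n) 𝓘(ℝ, EuclideanSpace ℝ (Fin N)) emb x) :=
      ((EuclideanSpace.proj (𝕜 := ℝ) j).hasFDerivAt.hasMFDerivAt.comp x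
        hd.hasMFDerivAt).mfderiv
    have hfs : SmoothFn (n := n) (fun p => (EuclideanSpace.proj (𝕜 := ℝ) j) (emb p)) :=
      ((EuclideanSpace.proj (𝕜 := ℝ) j).contMDiff (n := (⊤ : ℕ∞))).comp hembs
    have h0 := hsep _ hfs
    rw [hcomp] at h0
    exact h0
  have : J = 0 := hinj x (by rw [hJ]; exact (map_zero _).symm)
  rw [hgroup]
  exact this

lemma ric_summand (G : RiemannStructure n M) (x : M) (b : Fin n → Euc n)
    (hb : ∀ i j, G.g x (b i) (b j) = if i = j then (1 : ℝ) else 0)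
    {X Y : M → Euc n} (hX : SmoothVF (n := n) X) (hY : SmoothVF (n := n) Y) :
    G.ric x (X x) (Y x) = ∑ i : Fin n, G.g x (G.curv (fun _ => b i) X Y x) (b i) :=
  G.ric_spec x b hb X Y hX hY

lemma ric_symm (G : RiemannStructure n M) [T2Space M] [IsManifold (𝓡 n) (⊤ : ℕ∞) M]
    [CompactSpace M] (hn : 0 < n) {X Y : M → Euc n}
    (hX : SmoothVF (n := n) X) (hY : SmoothVF (n := n) Y) (x : M) :
    G.ric x (X x) (Y x) = G.ric x (Y x) (X x) := by
  obtain ⟨b, hb⟩ := G.onb_exists x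
  rw [G.ric_summand x b hb hX hY, G.ric_summand x b hb hY hX]
  apply Finset.sum_congr rfl
  intro i _
  set e : M → Euc n := fun _ => b i with he
  have hes : SmoothVF (n := n) e := smoothVF_const (b i)
  have hbi := G.bianchi hn hes hX hY x
  have hsw : G.curv Y e X x = - G.curv e Y X x := G.curv_swap e Y X x
  rw [hsw] at hbi
  -- hbi : curv e X Y x + curv X Y e x + -curv e Y X x = 0
  have hb1 := congrArg (fun v => G.g x v (b i)) hbi
  simp only [G.g_add_left, G.g_neg_left, G.g_zero_left] at hb1
  have hanti := G.curv_antisym hX hY hes hes x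
  -- hanti : g (curv X Y e) (e x) + g (curv X Y e) (e x) = 0  (Z = W = e)
  have : (e x : Euc n) = b i := rfl
  linarith [hb1, hanti]

lemma ric_smul (G : RiemannStructure n M) (c : ℝ) {X Y : M → Euc n}
    (hX : SmoothVF (n := n) X) (hY : SmoothVF (n := n) Y) (x : M) :
    G.ric x (Y x) (c • X x) = c * G.ric x (Y x) (X x) := by
  obtain ⟨b, hb⟩ := G.onb_exists x
  have hcX : SmoothVF (n := n) (fun p => c • X p) := ContMDiff.smul (contMDiff_const (c := c) : SmoothFn (n := n) (fun _ : M => c)) hX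
  have h1 : G.ric x (Y x) ((fun p => c • X p) x)
      = ∑ i : Fin n, G.g x (G.curv (fun _ => b i) Y (fun p => c • X p) x) (b i) :=
    G.ric_summand x b hb hY hcX
  rw [show (c • X x : Euc n) = (fun p => c • X p) x from rfl, h1,
    G.ric_summand x b hb hY hX, Finset.mul_sum]
  apply Finset.sum_congr rfl
  intro i _
  set e : M → Euc n := fun _ => b i with he
  have hcurv : G.curv e Y (fun p => c • X p) x = c • G.curv e Y X x := by
    have f1 : G.conn Y (fun p => c • X p) = fun p => c • G.conn Y X p :=
      funext fun p => G.conn_const_smul_snd c hX p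
    have f2 : G.conn e (fun p => c • X p) = fun p => c • G.conn e X p :=
      funext fun p => G.conn_const_smul_snd c hX p
    have c1 : G.conn e (G.conn Y (fun p => c • X p)) x = c • G.conn e (G.conn Y X) x := by
      rw [f1]; exact G.conn_const_smul_snd c (G.conn_smooth Y X hY hX) x
    have c2 : G.conn Y (G.conn e (fun p => c • X p)) x = c • G.conn Y (G.conn e X) x := by
      rw [f2]; exact G.conn_const_smul_snd c (G.conn_smooth e X (smoothVF_const (b i)) hX) x
    have c3 : G.conn (G.brk e Y) (fun p => c • X p) x = c • G.conn (G.brk e Y) X x :=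
      G.conn_const_smul_snd c hX x
    rw [curv_eq, curv_eq, c1, c2, c3, smul_sub, smul_sub]
  rw [hcurv, G.g_smul_left]

lemma dDeriv_vec_smul (f : M → ℝ) (c : ℝ) (U : M → Euc n) (x : M) :
    dDeriv (n := n) f (fun p => c • U p) x = c * dDeriv (n := n) f U x := by
  show mfderiv (𝓡 n) 𝓘(ℝ) f x (c • U x) = c * dDeriv (n := n) f U x
  exact (mfderiv (𝓡 n) 𝓘(ℝ) f x).map_smul c (U x)

lemma dDeriv_vec_finsum (f : M → ℝ) {ι : Type*} (s : Finset ι) (V : ι → Euc n) (x : M) :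
    dDeriv (n := n) f (fun _ => ∑ i ∈ s, V i) x = ∑ i ∈ s, dDeriv (n := n) f (fun _ => V i) x := by
  show mfderiv (𝓡 n) 𝓘(ℝ) f x (∑ i ∈ s, V i) = _
  exact map_sum (mfderiv (𝓡 n) 𝓘(ℝ) f x) (fun i => (V i : TangentSpace (𝓡 n) x)) s

lemma ric_A (G : RiemannStructure n M) (hn : 0 < n) {ψ : M → ℝ}
    (hψs : SmoothFn (n := n) ψ) {A : M → Euc n} (hAs : SmoothVF (n := n) A)
    (hcc : ∀ (X : M → Euc n) (x : M), G.conn X A x = ψ x • X x)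
    {X : M → Euc n} (hX : SmoothVF (n := n) X) (x : M) :
    G.ric x (X x) (A x) = (1 - (n : ℝ)) * dDeriv (n := n) ψ X x := by
  obtain ⟨b, hb⟩ := G.onb_exists x
  rw [G.ric_summand x b hb hX hAs]
  have hXA : G.conn X A = fun p => ψ p • X p := funext (hcc X)
  have hterm : ∀ i : Fin n, G.g x (G.curv (fun _ => b i) X A x) (b i)
      = dDeriv (n := n) ψ (fun _ => b i) x * G.g x (X x) (b i)
        - dDeriv (n := n) ψ X x * G.g x (b i) (b i) := by
    intro i
    set e : M → Euc n := fun _ => b i with he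
    have hes : SmoothVF (n := n) e := smoothVF_const (b i)
    have heA : G.conn e A = fun p => ψ p • e p := funext fun p => hcc e p
    have c1 : G.conn e (G.conn X A) x
        = dDeriv (n := n) ψ e x • X x + ψ x • G.conn e X x := by
      rw [hXA]; exact G.conn_leibniz ψ e X hψs hX x
    have c2 : G.conn X (G.conn e A) x
        = dDeriv (n := n) ψ X x • e x + ψ x • G.conn X e x := by
      rw [heA]; exact G.conn_leibniz ψ X e hψs hes x
    have c3 : G.conn (G.brk e X) A x = ψ x • (G.brk e X) x := hcc (G.brk e X) x
    have hbrk : (G.brk e X) x = G.conn e X x - G.conn X e x := rfl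
    have hcurv : G.curv e X A x
        = dDeriv (n := n) ψ e x • X x - dDeriv (n := n) ψ X x • e x := by
      rw [curv_eq, c1, c2, c3, hbrk, smul_sub]
      abel
    rw [hcurv, G.g_sub_left, G.g_smul_left, G.g_smul_left]
  rw [Finset.sum_congr rfl (fun i _ => hterm i), Finset.sum_sub_distrib]
  have hsum1 : (∑ i : Fin n, dDeriv (n := n) ψ (fun _ => b i) x * G.g x (X x) (b i))
      = dDeriv (n := n) ψ X x := by
    have hc : ∀ i ∈ Finset.univ, dDeriv (n := n) ψ (fun _ => b i) x * G.g x (X x) (b i)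
        = dDeriv (n := n) ψ (fun _ => G.g x (X x) (b i) • b i) x := by
      intro i _
      rw [dDeriv_vec_smul]
      ring
    rw [Finset.sum_congr rfl hc, ← dDeriv_vec_finsum ψ Finset.univ (fun i => G.g x (X x) (b i) • b i) x]
    have hxx := congrArg (fun v => dDeriv (n := n) ψ (fun _ : M => v) x)
      (G.onb_expand hn hb (X x))
    exact hxx
  have hsum2 : (∑ i : Fin n, dDeriv (n := n) ψ X x * G.g x (b i) (b i))
      = (n : ℝ) * dDeriv (n := n) ψ X x := by
    have hc : ∀ i ∈ Finset.univ, dDeriv (n := n) ψ X x * G.g x (b i) (b i)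
        = dDeriv (n := n) ψ X x := by
      intro i _
      rw [hb i i, if_pos rfl, mul_one]
    rw [Finset.sum_congr rfl hc, Finset.sum_const, Finset.card_univ, Fintype.card_fin,
      nsmul_eq_mul]
  rw [hsum1, hsum2]
  ring

end RiemannStructure

end Aux

/-- `d^∇ Ric (X, Y, α) = 0` for a closed conformal Killing non-isometric
one-form `α` (identified with its dual vector field `A`), `∇α = ψ g`, `ψ ≢ 0`. -/
theorem stmt5 {n : ℕ} (hn : 2 ≤ n) {M : Type} [TopologicalSpace M] [T2Space M]
    [ChartedSpace (Euc n) M] [IsManifold (𝓡 n) (⊤ : ℕ∞) M]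
    [CompactSpace M] [ConnectedSpace M] (G : RiemannStructure n M)
    (ψ : M → ℝ) (hψs : SmoothFn (n := n) ψ) (hψ : ψ ≠ 0)
    (A : M → Euc n) (hAs : SmoothVF (n := n) A)
    -- `∇α = ψ g`, with `α` identified with its dual vector field `A`
    (hcc : ∀ (X : M → Euc n) (x : M), G.conn X A x = ψ x • X x) :
    ∀ X Y : M → Euc n, SmoothVF (n := n) X → SmoothVF (n := n) Y → ∀ x : M,
      G.dnabla G.ricT X Y A x = 0 := by
  intro X Y hX hY x
  have hn0 : 0 < n := by omega
  set φ : M → ℝ := fun q => (1 - (n : ℝ)) * ψ q with hφ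
  have hφs : SmoothFn (n := n) φ := ContMDiff.mul contMDiff_const hψs
  have hφd : ∀ (U : M → Euc n) (p : M),
      dDeriv (n := n) φ U p = (1 - (n : ℝ)) * dDeriv (n := n) ψ U p := by
    intro U p
    have h1 : (fun q => (1 - (n : ℝ)) * ψ q) = ((1 - (n : ℝ)) • ψ) := by
      funext q; simp
    have h2 := ((hψs.mdiffAt p).hasMFDerivAt.const_smul (1 - (n : ℝ))).mfderiv
    show mfderiv (𝓡 n) 𝓘(ℝ) φ p (U p) = _
    rw [hφ, h1, h2]
    rfl
  have key : ∀ (U : M → Euc n), SmoothVF (n := n) U → ∀ p : M,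
      G.ric p (U p) (A p) = dDeriv (n := n) φ U p := by
    intro U hU p
    rw [G.ric_A hn0 hψs hAs hcc hU p, hφd U p]
  simp only [RiemannStructure.dnabla, RiemannStructure.cov2, RiemannStructure.ricT]
  have hfY : (fun p => G.ric p (Y p) (A p)) = dDeriv (n := n) φ Y :=
    funext fun p => key Y hY p
  have hfX : (fun p => G.ric p (X p) (A p)) = dDeriv (n := n) φ X :=
    funext fun p => key X hX p
  rw [hfY, hfX, key (G.conn X Y) (G.conn_smooth X Y hX hY) x,
    key (G.conn Y X) (G.conn_smooth Y X hY hX) x, hcc X x, hcc Y x,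
    G.ric_smul (ψ x) hX hY x, G.ric_smul (ψ x) hY hX x]
  have hsym := G.ric_symm hn0 hX hY x
  have hmul := congrArg (fun t => ψ x * t) hsym
  have htf := G.conn_torsion_free φ X Y hφs hX hY x
  have hlin : dDeriv (n := n) φ (fun p => G.conn X Y p - G.conn Y X p) x
      = dDeriv (n := n) φ (G.conn X Y) x - dDeriv (n := n) φ (G.conn Y X) x :=
    dDeriv_vec_sub φ _ _ x
  rw [hlin] at htf
  linarith [htf, hmul]

end
end
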